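/- (Monotonicity of r_k in k for odd k) For every η ∈ [0,1] and odd positive integers k ≤ k', r_{k'}(η) ≤ r_k(η). -/

import Mathlib

open Finset

noncomputable def rk (k : ℕ) (η : ℝ) : ℝ :=
  ∑ i ∈ Finset.Icc ((k + 1) / 2) k,
    (k.choose i : ℝ) * (η ^ i * (1 - η) ^ (k - i + 1) + (1 - η) ^ i * η ^ (k - i + 1))

noncomputable def Amaj (n : ℕ) (η : ℝ) : ℝ :=
  ∑ j ∈ Finset.range (n + 1),
    ((2 * n + 1).choose (n + 1 + j) : ℝ) * η ^ (n + 1 + j) * (1 - η) ^ (n - j)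

lemma Amaj_add (n : ℕ) (η : ℝ) :
    Amaj n η + ∑ j ∈ Finset.range (n + 1),
      ((2 * n + 1).choose (n + 1 + j) : ℝ) * (1 - η) ^ (n + 1 + j) * η ^ (n - j) = 1 := by
  have hB : (∑ j ∈ Finset.range (n + 1),
      ((2 * n + 1).choose (n + 1 + j) : ℝ) * (1 - η) ^ (n + 1 + j) * η ^ (n - j))
      = ∑ j ∈ Finset.range (n + 1),
        ((2 * n + 1).choose j : ℝ) * η ^ j * (1 - η) ^ (2 * n + 1 - j) := by
    rw [← Finset.sum_range_reflect]
    apply Finset.sum_congr rfl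
    intro j hj
    simp only [Finset.mem_range] at hj
    have h1 : n + 1 - 1 - j = n - j := by omega
    have h2 : (2 * n + 1).choose (n + 1 + (n - j)) = (2 * n + 1).choose j := by
      rw [← Nat.choose_symm (by omega)]
      congr 1
      omega
    have h3 : n - (n - j) = j := by omega
    have h4 : n + 1 + (n - j) = 2 * n + 1 - j := by omega
    rw [h1, h2, h3, h4]
    ring
  rw [hB]
  have hA : Amaj n η = ∑ j ∈ Finset.range (n + 1),
      ((2 * n + 1).choose (n + 1 + j) : ℝ) * η ^ (n + 1 + j) * (1 - η) ^ (2 * n + 1 - (n + 1 + j)) := by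
    apply Finset.sum_congr rfl
    intro j hj
    simp only [Finset.mem_range] at hj
    have : 2 * n + 1 - (n + 1 + j) = n - j := by omega
    rw [this]
  rw [hA, add_comm]
  have := Finset.sum_range_add
    (fun i => ((2 * n + 1).choose i : ℝ) * η ^ i * (1 - η) ^ (2 * n + 1 - i)) (n + 1) (n + 1)
  have hsplit : (∑ i ∈ Finset.range (2 * n + 2),
      ((2 * n + 1).choose i : ℝ) * η ^ i * (1 - η) ^ (2 * n + 1 - i)) =
      (∑ j ∈ Finset.range (n + 1), ((2 * n + 1).choose j : ℝ) * η ^ j * (1 - η) ^ (2 * n + 1 - j))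
      + ∑ j ∈ Finset.range (n + 1),
        ((2 * n + 1).choose (n + 1 + j) : ℝ) * η ^ (n + 1 + j) * (1 - η) ^ (2 * n + 1 - (n + 1 + j)) := by
    have h : 2 * n + 2 = (n + 1) + (n + 1) := by omega
    rw [h]
    exact this
  rw [← hsplit]
  have hbin := add_pow η (1 - η) (2 * n + 1)
  simp only [add_sub_cancel, one_pow] at hbin
  calc (∑ i ∈ Finset.range (2 * n + 2),
      ((2 * n + 1).choose i : ℝ) * η ^ i * (1 - η) ^ (2 * n + 1 - i))
      = ∑ i ∈ Finset.range (2 * n + 1 + 1), η ^ i * (1 - η) ^ (2 * n + 1 - i) * ((2 * n + 1).choose i : ℝ) := by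
        apply Finset.sum_congr (by norm_num) (fun i _ => by ring)
    _ = 1 := by rw [← hbin]

lemma rk_eq (n : ℕ) (η : ℝ) :
    rk (2 * n + 1) η = (1 - η) * Amaj n η
      + η * ∑ j ∈ Finset.range (n + 1),
          ((2 * n + 1).choose (n + 1 + j) : ℝ) * (1 - η) ^ (n + 1 + j) * η ^ (n - j) := by
  unfold rk
  have h1 : (2 * n + 1 + 1) / 2 = n + 1 := by omega
  rw [h1]
  have h2 : Finset.Icc (n + 1) (2 * n + 1) = Finset.Ico (n + 1) (2 * n + 2) := by
    exact (Finset.Ico_add_one_right_eq_Icc (n + 1) (2 * n + 1)).symm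
  rw [h2, Finset.sum_Ico_eq_sum_range]
  have h3 : 2 * n + 2 - (n + 1) = n + 1 := by omega
  rw [h3, Amaj, Finset.mul_sum, Finset.mul_sum, ← Finset.sum_add_distrib]
  apply Finset.sum_congr rfl
  intro j hj
  simp only [Finset.mem_range] at hj
  have h4 : 2 * n + 1 - (n + 1 + j) = n - j := by omega
  have h5 : n - j + 1 = n + 1 - j := by omega
  rw [h4]
  ring

lemma hsym (n : ℕ) : (2 * n + 1).choose n = (2 * n + 1).choose (n + 1) := by
  rw [← Nat.choose_symm (show n + 1 ≤ 2 * n + 1 by omega)]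
  congr 1
  omega

lemma hpas (n j : ℕ) : ((2 * (n + 1) + 1).choose (n + 1 + 1 + j) : ℝ)
    = ((2 * n + 1).choose (n + j) : ℝ) + 2 * ((2 * n + 1).choose (n + 1 + j) : ℝ)
      + ((2 * n + 1).choose (n + 2 + j) : ℝ) := by
  have e1 : 2 * (n + 1) + 1 = (2 * n + 1) + 1 + 1 := by omega
  have e2 : n + 1 + 1 + j = (n + j) + 1 + 1 := by omega
  rw [e1, e2, Nat.choose_succ_succ ((2*n+1)+1) ((n+j)+1), Nat.choose_succ_succ (2*n+1) (n+j),
    Nat.choose_succ_succ (2*n+1) ((n+j)+1)]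
  simp only [Nat.succ_eq_add_one, show n + j + 1 = n + 1 + j from by omega,
    show n + 1 + j + 1 = n + 2 + j from by omega]
  push_cast
  ring

lemma Amaj_succ (n : ℕ) (η : ℝ) :
    Amaj (n + 1) η = Amaj n η
      + (2 * η - 1) * ((2 * n + 1).choose (n + 1) : ℝ) * (η * (1 - η)) ^ (n + 1) := by
  have expand : Amaj (n + 1) η =
      (∑ j ∈ Finset.range (n + 2), ((2 * n + 1).choose (n + j) : ℝ) * η ^ (n + 2 + j) * (1 - η) ^ (n + 1 - j))
      + 2 * (∑ j ∈ Finset.range (n + 2), ((2 * n + 1).choose (n + 1 + j) : ℝ) * η ^ (n + 2 + j) * (1 - η) ^ (n + 1 - j))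
      + (∑ j ∈ Finset.range (n + 2), ((2 * n + 1).choose (n + 2 + j) : ℝ) * η ^ (n + 2 + j) * (1 - η) ^ (n + 1 - j)) := by
    unfold Amaj
    rw [Finset.mul_sum, ← Finset.sum_add_distrib, ← Finset.sum_add_distrib]
    apply Finset.sum_congr rfl
    intro j hj
    rw [hpas n j]
    have e : n + 1 + 1 + j = n + 2 + j := by omega
    rw [e]
    ring
  have S0 : (∑ j ∈ Finset.range (n + 2), ((2 * n + 1).choose (n + j) : ℝ) * η ^ (n + 2 + j) * (1 - η) ^ (n + 1 - j))
      = η ^ 2 * Amaj n η + ((2 * n + 1).choose (n + 1) : ℝ) * η ^ (n + 2) * (1 - η) ^ (n + 1) := by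
    rw [Finset.sum_range_succ' (fun j => ((2 * n + 1).choose (n + j) : ℝ) * η ^ (n + 2 + j) * (1 - η) ^ (n + 1 - j)) (n+1)]
    have tail : (∑ j ∈ Finset.range (n + 1),
        ((2 * n + 1).choose (n + (j + 1)) : ℝ) * η ^ (n + 2 + (j + 1)) * (1 - η) ^ (n + 1 - (j + 1)))
        = η ^ 2 * Amaj n η := by
      rw [Amaj, Finset.mul_sum]
      apply Finset.sum_congr rfl
      intro j hj
      simp only [Finset.mem_range] at hj
      have e1 : n + (j + 1) = n + 1 + j := by omega
      have e2 : n + 2 + (j + 1) = (n + 1 + j) + 2 := by omega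
      have e3 : n + 1 - (j + 1) = n - j := by omega
      rw [e1, e2, e3]
      ring
    rw [tail]
    norm_num [hsym n]
  have S1 : (∑ j ∈ Finset.range (n + 2), ((2 * n + 1).choose (n + 1 + j) : ℝ) * η ^ (n + 2 + j) * (1 - η) ^ (n + 1 - j))
      = η * (1 - η) * Amaj n η := by
    rw [Finset.sum_range_succ]
    have hz : (2 * n + 1).choose (n + 1 + (n + 1)) = 0 :=
      Nat.choose_eq_zero_of_lt (by omega)
    rw [hz]
    simp only [Nat.cast_zero, zero_mul, add_zero]
    rw [Amaj, Finset.mul_sum]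
    apply Finset.sum_congr rfl
    intro j hj
    simp only [Finset.mem_range] at hj
    have e1 : n + 2 + j = (n + 1 + j) + 1 := by omega
    have e2 : n + 1 - j = (n - j) + 1 := by omega
    rw [e1, e2]
    ring
  have S2 : (∑ j ∈ Finset.range (n + 2), ((2 * n + 1).choose (n + 2 + j) : ℝ) * η ^ (n + 2 + j) * (1 - η) ^ (n + 1 - j))
      = (1 - η) ^ 2 * (Amaj n η - ((2 * n + 1).choose (n + 1) : ℝ) * η ^ (n + 1) * (1 - η) ^ n) := by
    rw [Finset.sum_range_succ, Finset.sum_range_succ]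
    have hz1 : (2 * n + 1).choose (n + 2 + (n + 1)) = 0 :=
      Nat.choose_eq_zero_of_lt (by omega)
    have hz2 : (2 * n + 1).choose (n + 2 + n) = 0 :=
      Nat.choose_eq_zero_of_lt (by omega)
    rw [hz1, hz2]
    simp only [Nat.cast_zero, zero_mul, add_zero]
    have hA : Amaj n η = (∑ j ∈ Finset.range n,
        ((2 * n + 1).choose (n + 1 + (j + 1)) : ℝ) * η ^ (n + 1 + (j + 1)) * (1 - η) ^ (n - (j + 1)))
        + ((2 * n + 1).choose (n + 1) : ℝ) * η ^ (n + 1) * (1 - η) ^ n := by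
      rw [Amaj, Finset.sum_range_succ' (fun j => ((2 * n + 1).choose (n + 1 + j) : ℝ) * η ^ (n + 1 + j) * (1 - η) ^ (n - j)) n]
      simp
    rw [hA, add_sub_cancel_right, Finset.mul_sum]
    apply Finset.sum_congr rfl
    intro j hj
    simp only [Finset.mem_range] at hj
    have e1 : n + 1 + (j + 1) = n + 2 + j := by omega
    have e2 : n - (j + 1) = n - 1 - j := by omega
    have e3 : n + 1 - j = (n - 1 - j) + 2 := by omega
    rw [e1, e2, e3]
    ring
  rw [expand, S0, S1, S2, mul_pow]
  ring

lemma rk_closed (n : ℕ) (η : ℝ) : rk (2 * n + 1) η = η + (1 - 2 * η) * Amaj n η := by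
  have h1 := rk_eq n η
  have h2 := Amaj_add n η
  have hB : (∑ j ∈ Finset.range (n + 1),
      ((2 * n + 1).choose (n + 1 + j) : ℝ) * (1 - η) ^ (n + 1 + j) * η ^ (n - j))
      = 1 - Amaj n η := by linarith
  rw [h1, hB]
  ring

lemma rk_step (n : ℕ) {η : ℝ} (h0 : 0 ≤ η) (h1 : η ≤ 1) :
    rk (2 * (n + 1) + 1) η ≤ rk (2 * n + 1) η := by
  rw [rk_closed (n + 1) η, rk_closed n η, Amaj_succ n η]
  have hc : (0 : ℝ) ≤ ((2 * n + 1).choose (n + 1) : ℝ) := Nat.cast_nonneg _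
  have hp : (0 : ℝ) ≤ (η * (1 - η)) ^ (n + 1) :=
    pow_nonneg (mul_nonneg h0 (by linarith)) _
  nlinarith [sq_nonneg (1 - 2 * η), mul_nonneg hc hp, sq_nonneg (1 - 2 * η) ,
    mul_nonneg (mul_nonneg (sq_nonneg (1 - 2 * η)) hc) hp]

theorem stmt_16 : ∀ η ∈ Set.Icc (0 : ℝ) 1, ∀ k k' : ℕ, Odd k → Odd k' → 0 < k → k ≤ k' →
    rk k' η ≤ rk k η := by
  intro η hη k k' hk hk' _ hle
  obtain ⟨a, ha⟩ := hk
  obtain ⟨b, hb⟩ := hk'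
  subst ha hb
  have hab : a ≤ b := by omega
  have key : ∀ b : ℕ, a ≤ b → rk (2 * b + 1) η ≤ rk (2 * a + 1) η := by
    intro b hab
    induction b, hab using Nat.le_induction with
    | base => exact le_refl _
    | succ m hm ih =>
      exact le_trans (rk_step m hη.1 hη.2) ih
  exact key b hab
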